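/- Let I ⊆ [n], let v : I → [n] be injective, let c : I → [n] satisfy c(i) ≠ v(i) for all i ∈ I, and fix i ∈ I. Let S_i be the set of permutations σ of [n] with σ(j) ≠ v(j) for all j ∈ I and σ(i) = c(i). Then n·|S_i| ≥ A(n,|I|) − n·(n−2)!, where A(n,|I|) is the number of permutations avoiding v on I. -/

import Mathlib

open Nat

open Finset

lemma two_point_count (n : ℕ) (a b x y : Fin n) (hab : a ≠ b) (hxy : x ≠ y) :
    (Finset.univ.filter (fun σ : Equiv.Perm (Fin n) => σ a = x ∧ σ b = y)).card ≤ (n - 2)! := by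
  classical
  have hcard1 : Fintype.card {z : Fin n // z ≠ a ∧ z ≠ b} = n - 2 := by
    rw [Fintype.card_subtype]
    have h1 : (univ.filter fun z : Fin n => z ≠ a ∧ z ≠ b) = univ \ {a, b} := by
      ext z; simp [not_or]
    rw [h1, card_sdiff_of_subset (subset_univ _), Finset.card_univ, Fintype.card_fin,
      card_insert_of_notMem (by simpa using hab), card_singleton]
  have hcard2 : Fintype.card {z : Fin n // z ≠ x ∧ z ≠ y} = n - 2 := by
    rw [Fintype.card_subtype]
    have h1 : (univ.filter fun z : Fin n => z ≠ x ∧ z ≠ y) = univ \ {x, y} := by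
      ext z; simp [not_or]
    rw [h1, card_sdiff_of_subset (subset_univ _), Finset.card_univ, Fintype.card_fin,
      card_insert_of_notMem (by simpa using hxy), card_singleton]
  have hne : Nonempty ({z : Fin n // z ≠ a ∧ z ≠ b} ≃ {z : Fin n // z ≠ x ∧ z ≠ y}) :=
    ⟨Fintype.equivOfCardEq (hcard1.trans hcard2.symm)⟩
  obtain ⟨e0⟩ := hne
  set F : Equiv.Perm (Fin n) → ({z : Fin n // z ≠ a ∧ z ≠ b} ≃ {z : Fin n // z ≠ x ∧ z ≠ y}) :=
    fun σ => if h : σ a = x ∧ σ b = y then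
      { toFun := fun z => ⟨σ z, fun hz => z.2.1 (σ.injective (hz.trans h.1.symm)),
          fun hz => z.2.2 (σ.injective (hz.trans h.2.symm))⟩
        invFun := fun w => ⟨σ.symm w, fun hw => w.2.1 (by
            have h2 : (w : Fin n) = σ ((Equiv.symm σ) w) := (σ.apply_symm_apply _).symm
            rw [h2, hw, h.1]),
          fun hw => w.2.2 (by
            have h2 : (w : Fin n) = σ ((Equiv.symm σ) w) := (σ.apply_symm_apply _).symm
            rw [h2, hw, h.2])⟩
        left_inv := fun z => by simp
        right_inv := fun w => by simp }
    else e0 with hF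
  have key : (Finset.univ.filter (fun σ : Equiv.Perm (Fin n) => σ a = x ∧ σ b = y)).card ≤
      (Finset.univ : Finset ({z : Fin n // z ≠ a ∧ z ≠ b} ≃ {z : Fin n // z ≠ x ∧ z ≠ y})).card := by
    apply card_le_card_of_injOn F (fun _ _ => mem_univ _)
    intro σ hσ σ' hσ' hFF
    simp only [coe_filter, Set.mem_setOf_eq, mem_univ, true_and] at hσ hσ'
    rw [hF] at hFF
    simp only [dif_pos hσ, dif_pos hσ'] at hFF
    ext z
    by_cases hza : z = a
    · rw [hza, hσ.1, hσ'.1]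
    by_cases hzb : z = b
    · rw [hzb, hσ.2, hσ'.2]
    · have := congrFun (congrArg (fun (e : _ ≃ _) => (e : _ → _)) hFF) ⟨z, hza, hzb⟩
      exact congrArg Fin.val (by simpa using Subtype.ext_iff.mp this)
  rw [Finset.card_univ, Fintype.card_equiv e0, hcard1] at key
  exact key

/-- `n |S_i| ≥ A(n,|I|) − n (n−2)!`, where `S_i` is the set of `0`-queries for `v`
on `I` taking value `c i` at `i`, and `A(n,|I|)` is the number of `0`-queries for `v`. -/
theorem stmt_5 (n : ℕ) (I : Finset (Fin n)) (v c : Fin n → Fin n)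
    (hv : Set.InjOn v I) (hc : ∀ i ∈ I, c i ≠ v i) (i : Fin n) (hi : i ∈ I) :
    (n : ℤ) *
        ((Finset.univ.filter
            (fun σ : Equiv.Perm (Fin n) =>
              (∀ j ∈ I, σ j ≠ v j) ∧ σ i = c i)).card : ℤ) ≥
      ((Finset.univ.filter
          (fun σ : Equiv.Perm (Fin n) => ∀ j ∈ I, σ j ≠ v j)).card : ℤ) -
        (n : ℤ) * ((n - 2)! : ℤ) := by
  classical
  set A := Finset.univ.filter (fun σ : Equiv.Perm (Fin n) => ∀ j ∈ I, σ j ≠ v j) with hA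
  set S := Finset.univ.filter
      (fun σ : Equiv.Perm (Fin n) => (∀ j ∈ I, σ j ≠ v j) ∧ σ i = c i) with hS
  set B := A.filter (fun σ => σ⁻¹ (c i) ∈ I ∧ σ i = v (σ⁻¹ (c i))) with hB
  set f : Equiv.Perm (Fin n) → Equiv.Perm (Fin n) :=
    fun σ => σ * Equiv.swap i (σ⁻¹ (c i)) with hf
  have hmemA : ∀ σ, σ ∈ A ↔ ∀ j ∈ I, σ j ≠ v j := by
    intro σ; simp [hA]
  have hmemS : ∀ σ, σ ∈ S ↔ (∀ j ∈ I, σ j ≠ v j) ∧ σ i = c i := by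
    intro σ; simp [hS]
  -- Step 1: f maps A \ B into S
  have maps : ∀ σ ∈ A \ B, f σ ∈ S := by
    intro σ hσ
    rw [mem_sdiff] at hσ
    obtain ⟨hσA, hσB⟩ := hσ
    have hA' := (hmemA σ).mp hσA
    have hnotB : ¬(σ⁻¹ (c i) ∈ I ∧ σ i = v (σ⁻¹ (c i))) := by
      intro h; exact hσB (mem_filter.mpr ⟨hσA, h⟩)
    set ℓ := σ⁻¹ (c i) with hℓ
    have hfi : f σ i = c i := by
      simp [hf, Equiv.swap_apply_left, hℓ]
    rw [hmemS]
    refine ⟨?_, hfi⟩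
    intro j hj
    by_cases hji : j = i
    · rw [hji, hfi]; exact hc i hi
    by_cases hjl : j = ℓ
    · have hfj : f σ j = σ i := by
        rw [hjl]; show σ (Equiv.swap i ℓ ℓ) = σ i; rw [Equiv.swap_apply_right]
      rw [hfj]
      intro hcontra
      exact hnotB ⟨hjl ▸ hj, by rw [hcontra, hjl]⟩
    · have hfj : f σ j = σ j := by
        show σ (Equiv.swap i ℓ j) = σ j; rw [Equiv.swap_apply_of_ne_of_ne hji hjl]
      rw [hfj]; exact hA' j hj
  -- Step 1b: fibers of f on A \ B have size ≤ n
  have fibers : ∀ τ ∈ S, ((A \ B).filter (fun σ => f σ = τ)).card ≤ n := by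
    intro τ _
    have hle : ((A \ B).filter (fun σ => f σ = τ)).card ≤
        (Finset.univ : Finset (Fin n)).card := by
      apply card_le_card_of_injOn (fun σ => σ⁻¹ (c i)) (fun _ _ => mem_univ _)
      intro σ hσ σ' hσ' heq
      simp only [coe_filter, Set.mem_setOf_eq] at hσ hσ'
      have h1 : σ = τ * Equiv.swap i (σ⁻¹ (c i)) := by
        have h := hσ.2
        rw [hf] at h
        rw [← h, mul_assoc]
        simp
      have h2 : σ' = τ * Equiv.swap i (σ'⁻¹ (c i)) := by
        have h := hσ'.2
        rw [hf] at h
        rw [← h, mul_assoc]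
        simp
      rw [h1, h2, show σ⁻¹ (c i) = σ'⁻¹ (c i) from heq]
    simpa using hle
  have step1 : (A \ B).card ≤ n * S.card :=
    card_le_mul_card_image_of_maps_to maps n fibers
  -- Step 2: |B| ≤ n * (n-2)!
  have step2 : B.card ≤ n * (n - 2)! := by
    have hsub : B ⊆ Finset.univ.biUnion (fun ℓ : Fin n =>
        Finset.univ.filter (fun σ : Equiv.Perm (Fin n) => σ i = v ℓ ∧ σ ℓ = c i)) := by
      intro σ hσ
      rw [hB, mem_filter] at hσ
      obtain ⟨hσA, hℓI, hσi⟩ := hσ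
      exact mem_biUnion.mpr
        ⟨σ⁻¹ (c i), mem_univ _, mem_filter.mpr ⟨mem_univ _, hσi, by simp⟩⟩
    calc B.card
        ≤ (Finset.univ.biUnion (fun ℓ : Fin n =>
            Finset.univ.filter
              (fun σ : Equiv.Perm (Fin n) => σ i = v ℓ ∧ σ ℓ = c i))).card :=
          card_le_card hsub
      _ ≤ ∑ ℓ : Fin n, (Finset.univ.filter
            (fun σ : Equiv.Perm (Fin n) => σ i = v ℓ ∧ σ ℓ = c i)).card := card_biUnion_le
      _ ≤ ∑ _ℓ : Fin n, (n - 2)! := by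
          apply sum_le_sum
          intro ℓ _
          by_cases hℓi : ℓ = i
          · subst hℓi
            have hzero : (Finset.univ.filter
                (fun σ : Equiv.Perm (Fin n) => σ ℓ = v ℓ ∧ σ ℓ = c ℓ)).card = 0 := by
              rw [Finset.card_eq_zero]
              apply filter_eq_empty_iff.mpr
              intro σ _
              rintro ⟨h1, h2⟩
              exact hc ℓ hi (h2.symm.trans h1)
            rw [hzero]; exact Nat.zero_le _
          by_cases hvc : v ℓ = c i
          · have hzero : (Finset.univ.filter
                (fun σ : Equiv.Perm (Fin n) => σ i = v ℓ ∧ σ ℓ = c i)).card = 0 := by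
              rw [Finset.card_eq_zero]
              apply filter_eq_empty_iff.mpr
              intro σ _
              rintro ⟨h1, h2⟩
              exact hℓi (σ.injective (h2.trans (hvc.symm.trans h1.symm)))
            rw [hzero]; exact Nat.zero_le _
          · exact two_point_count n i ℓ (v ℓ) (c i) (Ne.symm hℓi) hvc
      _ = n * (n - 2)! := by simp [mul_comm]
  -- Combine
  have hBsubA : B ⊆ A := filter_subset _ _
  have hsplit : (A \ B).card + B.card = A.card := card_sdiff_add_card_eq_card hBsubA
  have final : A.card ≤ n * S.card + n * (n - 2)! := by omega
  have finalZ : (A.card : ℤ) ≤ (n : ℤ) * (S.card : ℤ) + (n : ℤ) * ((n - 2)! : ℤ) := by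
    exact_mod_cast final
  linarith
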